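/- Let μ > 0, α ∈ (0,1), β > 0, λ₀ > 0, and set κ = (μ/(1-α))·β²·α·(2-α). For any τ with -λ₀ < τ < μ/(1-α) and τ ≠ 0, define β' = sqrt(β²(1-α)² + κ/(μ/(1-α)-τ)), α' = 1 - β(1-α)/β', μ' = β(1-α)(μ/(1-α)-τ)/β', and λ₀' = λ₀ + τ. Then μ' > 0, α' ∈ (0,1), β' > 0, λ₀' > 0, (μ',α',β',λ₀') ≠ (μ,α,β,λ₀), and the three identities hold: μ'/(1-α') + λ₀' = μ/(1-α) + λ₀; μ'α'(2-α')/(1-α')³ = μα(2-α)/(1-α)³; β'(1-α') = β(1-α). -/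

import Mathlib

theorem univariate_non_identifiability
    (μ α β l₀ : ℝ)
    (hμ : 0 < μ) (hα : α ∈ Set.Ioo (0:ℝ) 1) (hβ : 0 < β) (hl : 0 < l₀)
    (τ : ℝ) (hτ1 : -l₀ < τ) (hτ2 : τ < μ / (1 - α)) (hτ0 : τ ≠ 0) :
    let κ : ℝ := (μ / (1 - α)) * β ^ 2 * α * (2 - α)
    let β' : ℝ := Real.sqrt (β ^ 2 * (1 - α) ^ 2 + κ / (μ / (1 - α) - τ))
    let α' : ℝ := 1 - β * (1 - α) / β'
    let μ' : ℝ := β * (1 - α) * (μ / (1 - α) - τ) / β'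
    let l₀' : ℝ := l₀ + τ
    0 < μ' ∧ α' ∈ Set.Ioo (0:ℝ) 1 ∧ 0 < β' ∧ 0 < l₀' ∧
      (μ', α', β', l₀') ≠ (μ, α, β, l₀) ∧
      μ' / (1 - α') + l₀' = μ / (1 - α) + l₀ ∧
      μ' * α' * (2 - α') / (1 - α') ^ 3 = μ * α * (2 - α) / (1 - α) ^ 3 ∧
      β' * (1 - α') = β * (1 - α) := by
  obtain ⟨hα0, hα1⟩ := hα
  have h1α : (0:ℝ) < 1 - α := by linarith
  intro κ β' α' μ' l₀'
  have hm : 0 < μ / (1 - α) := div_pos hμ h1α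
  have hmt : 0 < μ / (1 - α) - τ := by linarith
  have hκ : 0 < κ := by
    exact mul_pos (mul_pos (mul_pos hm (pow_pos hβ 2)) hα0) (by linarith)
  have hs : 0 < β ^ 2 * (1 - α) ^ 2 + κ / (μ / (1 - α) - τ) :=
    add_pos (by positivity) (div_pos hκ hmt)
  have hβ'sq : β' ^ 2 = β ^ 2 * (1 - α) ^ 2 + κ / (μ / (1 - α) - τ) :=
    Real.sq_sqrt hs.le
  have hβ'pos : 0 < β' := Real.sqrt_pos.mpr hs
  have hβ'ne : β' ≠ 0 := hβ'pos.ne'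
  have hba : 0 < β * (1 - α) := mul_pos hβ h1α
  have hgt : β * (1 - α) < β' := by
    rw [show β' = Real.sqrt (β ^ 2 * (1 - α) ^ 2 + κ / (μ / (1 - α) - τ)) from rfl,
      Real.lt_sqrt hba.le]
    have := div_pos hκ hmt
    nlinarith
  have h1α' : 1 - α' = β * (1 - α) / β' := by
    show 1 - (1 - β * (1 - α) / β') = _; ring
  have h1α'pos : 0 < 1 - α' := by rw [h1α']; exact div_pos hba hβ'pos
  have h1α'ne : (1 : ℝ) - α' ≠ 0 := h1α'pos.ne'
  have hμ'pos : 0 < μ' := div_pos (mul_pos hba hmt) hβ'pos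
  have e1 : β' * (1 - α') = β * (1 - α) := by
    rw [h1α', mul_div_cancel₀ _ hβ'ne]
  have e2 : μ' / (1 - α') = μ / (1 - α) - τ := by
    have hμ'eq : μ' = (μ / (1 - α) - τ) * (1 - α') := by
      rw [h1α']
      show β * (1 - α) * (μ / (1 - α) - τ) / β' = _
      ring
    rw [hμ'eq, mul_div_assoc, div_self h1α'ne, mul_one]
  refine ⟨hμ'pos, ⟨?_, ?_⟩, hβ'pos, by show 0 < l₀ + τ; linarith, ?_, ?_, ?_, e1⟩
  · show 0 < 1 - β * (1 - α) / β'
    rw [sub_pos, div_lt_one hβ'pos]; exact hgt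
  · show 1 - β * (1 - α) / β' < 1
    have := div_pos hba hβ'pos
    linarith
  · intro h
    have h4 : l₀' = l₀ := congrArg (fun p => p.2.2.2) h
    exact hτ0 (by simpa using sub_eq_zero.mpr h4 ▸ (by show l₀ + τ - l₀ = τ; ring : l₀ + τ - l₀ = τ) ▸ rfl)
  · rw [e2]; show _ = μ / (1 - α) + l₀
    have : l₀' = l₀ + τ := rfl
    rw [this]; ring
  · have key : μ' * α' * (2 - α') / (1 - α') ^ 3 =
        (μ' / (1 - α')) * ((1 - (1 - α') ^ 2) / (1 - α') ^ 2) := by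
      field_simp
      ring
    rw [key, e2]
    have hx : (1 - α') ^ 2 = β ^ 2 * (1 - α) ^ 2 / β' ^ 2 := by
      rw [h1α', div_pow]; ring_nf
    obtain ⟨d, hd⟩ : ∃ d : ℝ, d = κ / (μ / (1 - α) - τ) := ⟨_, rfl⟩
    rw [← hd] at hβ'sq hs
    have hbne : β ^ 2 * (1 - α) ^ 2 ≠ 0 := by positivity
    have e3 : (1 - (1 - α') ^ 2) / (1 - α') ^ 2 = d / (β ^ 2 * (1 - α) ^ 2) := by
      rw [hx, hβ'sq]
      field_simp
      ring
    rw [e3]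
    have e4 : (μ / (1 - α) - τ) * (d / (β ^ 2 * (1 - α) ^ 2)) =
        κ / (β ^ 2 * (1 - α) ^ 2) := by
      rw [hd, div_div, ← mul_div_assoc]
      exact mul_div_mul_left _ _ hmt.ne'
    rw [e4]
    have hκdef : κ = (μ / (1 - α)) * β ^ 2 * α * (2 - α) := rfl
    rw [hκdef]
    field_simp
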